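/- Let G = (D, τ0, τ1, τ2) be a graph-encoded map (ribbon graph) and let A ⊆ D be closed under τ0 and τ2. If the partial dual G^A is bipartite, i.e., there exists χ : D → Bool constant on every orbit of the subgroup generated by {τ1, τ2^A} with χ(τ0^A f) = ¬χ(f) for every flag f, then the partial dual G^{D \ A} is Eulerian, i.e., every orbit of the subgroup generated by {τ1, τ2^{D \ A}} has cardinality divisible by 4. -/

import Mathlib

/-- **Lemma (bipartite partial dual gives Eulerian complementary partial dual).**
Let `G = (D, τ0, τ1, τ2)` be a graph-encoded map and `A ⊆ D` closed under `τ0` and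
`τ2`.  If the partial dual `G^A` is bipartite (there is `χ : D → Bool` constant on
every `⟨τ1, τ2^A⟩`-orbit with `χ (τ0^A f) = ¬ χ f` for every flag `f`), then the
partial dual `G^{D \ A}` is Eulerian (every `⟨τ1, τ2^{D \ A}⟩`-orbit has cardinality
divisible by 4). -/
theorem eulerian_complement_of_bipartite_partialDual
    {D : Type*} [Fintype D] [Nonempty D]
    (τ0 τ1 τ2 : Equiv.Perm D)
    (h0i : ∀ f, τ0 (τ0 f) = f) (h0f : ∀ f, τ0 f ≠ f)
    (h1i : ∀ f, τ1 (τ1 f) = f) (h1f : ∀ f, τ1 f ≠ f)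
    (h2i : ∀ f, τ2 (τ2 f) = f) (h2f : ∀ f, τ2 f ≠ f)
    (hcomm : ∀ f, τ0 (τ2 f) = τ2 (τ0 f))
    (h02f : ∀ f, τ0 (τ2 f) ≠ f)
    (A : Set D) (hA0 : ∀ f ∈ A, τ0 f ∈ A) (hA2 : ∀ f ∈ A, τ2 f ∈ A)
    -- σ0 is τ0^A and σ2 is τ2^A
    (σ0 σ2 : Equiv.Perm D)
    (hσ0in : ∀ f ∈ A, σ0 f = τ2 f) (hσ0out : ∀ f ∉ A, σ0 f = τ0 f)
    (hσ2in : ∀ f ∈ A, σ2 f = τ0 f) (hσ2out : ∀ f ∉ A, σ2 f = τ2 f)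
    -- ρ2 is τ2^{D \ A} : agrees with τ0 on D \ A and with τ2 on A
    (ρ2 : Equiv.Perm D)
    (hρ2in : ∀ f ∈ A, ρ2 f = τ2 f) (hρ2out : ∀ f ∉ A, ρ2 f = τ0 f)
    -- G^A is bipartite
    (hbip : ∃ χ : D → Bool,
      (∀ f : D, ∀ g ∈ MulAction.orbit
          (Subgroup.closure {τ1, σ2} : Subgroup (Equiv.Perm D)) f, χ g = χ f) ∧
      (∀ f : D, χ (σ0 f) = !χ f)) :
    ∀ f : D, 4 ∣ Nat.card
      (MulAction.orbit (Subgroup.closure {τ1, ρ2} : Subgroup (Equiv.Perm D)) f) := by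
  classical
  obtain ⟨χ, hχorb, hχflip⟩ := hbip
  -- ρ2 coincides with σ0
  have hρσ : ρ2 = σ0 := by
    ext x
    by_cases hx : x ∈ A
    · rw [hρ2in x hx, hσ0in x hx]
    · rw [hρ2out x hx, hσ0out x hx]
  subst hρσ
  -- basic closure facts
  have hA0' : ∀ x ∉ A, τ0 x ∉ A := fun x hx h => hx (by rw [← h0i x]; exact hA0 _ h)
  have hA2' : ∀ x ∉ A, τ2 x ∉ A := fun x hx h => hx (by rw [← h2i x]; exact hA2 _ h)
  -- ρ2 is an involution
  have hσ0i : ∀ x, ρ2 (ρ2 x) = x := by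
    intro x
    by_cases hx : x ∈ A
    · rw [hσ0in x hx, hσ0in _ (hA2 x hx), h2i]
    · rw [hσ0out x hx, hσ0out _ (hA0' x hx), h0i]
  have hτ1sq : τ1 * τ1 = 1 := by ext x; exact h1i x
  have hσ0sq : ρ2 * ρ2 = 1 := by ext x; exact hσ0i x
  have hτ1inv : τ1⁻¹ = τ1 := inv_eq_of_mul_eq_one_right hτ1sq
  have hσ0inv : ρ2⁻¹ = ρ2 := inv_eq_of_mul_eq_one_right hσ0sq
  -- χ is τ1-invariant
  have hχ1 : ∀ x, χ (τ1 x) = χ x := by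
    intro x
    exact hχorb x (τ1 x)
      ⟨⟨τ1, Subgroup.subset_closure (Set.mem_insert _ _)⟩, rfl⟩
  set c : Equiv.Perm D := ρ2 * τ1 with hcdef
  have hχc : ∀ x, χ (c x) = !χ x := by
    intro x
    show χ (ρ2 (τ1 x)) = !χ x
    rw [hχflip, hχ1]
  -- conjugation relation : τ1 * c^k = c^(-k) * τ1
  have hconjc : τ1 * c * τ1⁻¹ = c⁻¹ := by
    ext x
    rw [hτ1inv, hcdef, mul_inv_rev, hτ1inv, hσ0inv]
    simp only [Equiv.Perm.mul_apply]
    rw [h1i]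
  have hconj : ∀ k : ℤ, τ1 * c ^ k = c ^ (-k) * τ1 := by
    intro k
    have h := map_zpow (MulAut.conj τ1) c k
    rw [MulAut.conj_apply, MulAut.conj_apply, hconjc, inv_zpow, ← zpow_neg] at h
    calc τ1 * c ^ k = (τ1 * c ^ k * τ1⁻¹) * τ1 := by group
    _ = c ^ (-k) * τ1 := by rw [h]
  have hconjpt : ∀ (k : ℤ) (x : D), τ1 ((c ^ k) x) = (c ^ (-k)) (τ1 x) := by
    intro k x
    have : (τ1 * c ^ k) x = (c ^ (-k) * τ1) x := by rw [hconj k]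
    simpa using this
  -- χ-parity along c-powers (integer exponents)
  have hχcinv : ∀ x, χ (c⁻¹ x) = !χ x := by
    intro x
    have h := hχc (c⁻¹ x)
    rw [← Equiv.Perm.mul_apply, mul_inv_cancel, Equiv.Perm.one_apply] at h
    rw [h, Bool.not_not]
  have hχzpow : ∀ (k : ℤ) (x : D), χ ((c ^ k) x) = if Even k then χ x else !χ x := by
    intro k
    induction k using Int.induction_on with
    | zero => simp
    | succ n ih =>
        intro x
        have : (c ^ ((n : ℤ) + 1)) x = (c ^ (n : ℤ)) (c x) := by
          rw [zpow_add, zpow_one]; rfl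
        rw [this, ih (c x), hχc]
        by_cases h : Even (n : ℤ)
        · have h' : Even n := (Int.even_coe_nat n).mp h
          simp [h, h', Int.even_add_one]
        · have h' : Odd n := Nat.not_even_iff_odd.mp (fun e => h ((Int.even_coe_nat n).mpr e))
          simp [h, h', Int.even_add_one]
    | pred n ih =>
        intro x
        have : (c ^ (-(n : ℤ) - 1)) x = (c ^ (-(n : ℤ))) (c⁻¹ x) := by
          rw [sub_eq_add_neg, zpow_add, zpow_neg_one]; rfl
        rw [this, ih (c⁻¹ x), hχcinv]
        by_cases h : Even (-(n : ℤ))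
        · have h' : ¬ Even (-(n : ℤ) - 1) := by
            simpa [Int.even_sub] using h
          simp [h, h']
        · have h' : Even (-(n : ℤ) - 1) := by
            simpa [Int.even_sub] using h
          simp [h, h']
  -- the dihedral "normal form" subgroup
  let S : Subgroup (Equiv.Perm D) :=
  { carrier := {h | ∃ k : ℤ, h = c ^ k ∨ h = c ^ k * τ1}
    one_mem' := ⟨0, Or.inl (by simp)⟩
    mul_mem' := by
      rintro a b ⟨k, hk | hk⟩ ⟨j, hj | hj⟩ <;> subst hk <;> subst hj
      · exact ⟨k + j, Or.inl (by rw [zpow_add])⟩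
      · exact ⟨k + j, Or.inr (by rw [zpow_add, mul_assoc])⟩
      · refine ⟨k - j, Or.inr ?_⟩
        rw [mul_assoc, hconj j, ← mul_assoc, ← zpow_add, sub_eq_add_neg]
      · refine ⟨k - j, Or.inl ?_⟩
        calc c ^ k * τ1 * (c ^ j * τ1)
            = c ^ k * (τ1 * c ^ j) * τ1 := by group
          _ = c ^ k * (c ^ (-j) * τ1) * τ1 := by rw [hconj j]
          _ = c ^ k * c ^ (-j) * (τ1 * τ1) := by group
          _ = c ^ (k - j) := by rw [hτ1sq, mul_one, ← zpow_add, sub_eq_add_neg]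
    inv_mem' := by
      rintro a ⟨k, hk | hk⟩ <;> subst hk
      · exact ⟨-k, Or.inl (by rw [← zpow_neg])⟩
      · refine ⟨k, Or.inr ?_⟩
        rw [mul_inv_rev, hτ1inv, ← zpow_neg, hconj (-k), neg_neg] }
  have hτ1S : τ1 ∈ S := ⟨0, Or.inr (by simp)⟩
  have hσ0S : ρ2 ∈ S := ⟨1, Or.inr (by
    rw [zpow_one, hcdef, mul_assoc, hτ1sq, mul_one])⟩
  have hcl : Subgroup.closure {τ1, ρ2} ≤ S := by
    rw [Subgroup.closure_le]
    rintro x (rfl | rfl)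
    · exact hτ1S
    · exact hσ0S
  -- elements of the closure
  have hτ1m : τ1 ∈ Subgroup.closure ({τ1, ρ2} : Set (Equiv.Perm D)) :=
    Subgroup.subset_closure (Set.mem_insert _ _)
  have hσ0m : ρ2 ∈ Subgroup.closure ({τ1, ρ2} : Set (Equiv.Perm D)) :=
    Subgroup.subset_closure (Set.mem_insert_of_mem _ rfl)
  have hcm : c ∈ Subgroup.closure ({τ1, ρ2} : Set (Equiv.Perm D)) :=
    mul_mem hσ0m hτ1m
  have hckm : ∀ k : ℤ, c ^ k ∈ Subgroup.closure ({τ1, ρ2} : Set (Equiv.Perm D)) :=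
    fun k => zpow_mem hcm k
  intro f
  -- the c-cycle through f
  set C : Set D := MulAction.orbit (Subgroup.zpowers c) f with hCdef
  have hCmem : ∀ x, x ∈ C ↔ ∃ k : ℤ, (c ^ k) f = x := by
    intro x
    constructor
    · rintro ⟨⟨g, hg⟩, rfl⟩
      obtain ⟨k, rfl⟩ := Subgroup.mem_zpowers_iff.mp hg
      exact ⟨k, rfl⟩
    · rintro ⟨k, rfl⟩
      exact ⟨⟨c ^ k, Subgroup.mem_zpowers_iff.mpr ⟨k, rfl⟩⟩, rfl⟩
  -- the orbit is the disjoint union of C and τ1 '' C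
  have horb : (MulAction.orbit
      (Subgroup.closure ({τ1, ρ2} : Set (Equiv.Perm D))) f : Set D)
      = C ∪ τ1 '' C := by
    ext x
    constructor
    · rintro ⟨⟨g, hg⟩, rfl⟩
      obtain ⟨k, hk | hk⟩ := hcl hg <;> subst hk
      · exact Or.inl ((hCmem _).mpr ⟨k, rfl⟩)
      · refine Or.inr ⟨(c ^ (-k)) f, (hCmem _).mpr ⟨-k, rfl⟩, ?_⟩
        rw [hconjpt (-k) f, neg_neg]
        rfl
    · rintro (hx | ⟨y, hy, rfl⟩)
      · obtain ⟨k, rfl⟩ := (hCmem _).mp hx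
        exact ⟨⟨c ^ k, hckm k⟩, rfl⟩
      · obtain ⟨k, rfl⟩ := (hCmem _).mp hy
        exact ⟨⟨τ1 * c ^ k, mul_mem hτ1m (hckm k)⟩, rfl⟩
  have hdisj : Disjoint C (τ1 '' C) := by
    rw [Set.disjoint_left]
    rintro x hx ⟨y, hy, hyx⟩
    obtain ⟨k, rfl⟩ := (hCmem _).mp hx
    obtain ⟨j, rfl⟩ := (hCmem _).mp hy
    -- derive τ1 f = c^(j+k) f
    have h1 : τ1 f = (c ^ (j + k)) f := by
      have h2 : (c ^ j) (τ1 ((c ^ j) f)) = (c ^ j) ((c ^ k) f) := by rw [hyx]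
      have h3 : (c ^ j) (τ1 ((c ^ j) f)) = τ1 f := by
        rw [hconjpt j f, ← Equiv.Perm.mul_apply, ← zpow_add, add_neg_cancel,
          zpow_zero]
        rfl
      rw [h3] at h2
      rw [h2, ← Equiv.Perm.mul_apply, ← zpow_add]
    -- parity via χ forces j + k even
    have heven : Even (j + k) := by
      by_contra hodd
      have := hχzpow (j + k) f
      rw [if_neg hodd, ← h1, hχ1] at this
      cases hb : χ f <;> rw [hb] at this <;> simp at this
    obtain ⟨s, hs⟩ := heven
    -- then c^s f is a fixed point of τ1, contradiction
    apply h1f ((c ^ s) f)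
    rw [hconjpt s f, h1, hs, ← Equiv.Perm.mul_apply, ← zpow_add]
    have hz : -s + (s + s) = s := by ring
    rw [hz]
  -- count
  rw [horb, Nat.card_coe_set_eq,
    Set.ncard_union_eq hdisj (Set.toFinite _) (Set.toFinite _),
    Set.ncard_image_of_injective _ τ1.injective]
  set m : ℕ := Function.minimalPeriod (c • ·) f with hmdef
  have hCcard : C.ncard = m := by
    rw [← Nat.card_coe_set_eq, hCdef,
      Nat.card_congr (MulAction.orbitZPowersEquiv c f), Nat.card_zmod]
  have hcm_f : (c ^ m) f = f := by
    have h := Function.isPeriodicPt_minimalPeriod (c • ·) f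
    have h2 : (c • ·)^[m] f = f := h
    rw [smul_iterate] at h2
    simpa using h2
  have hmeven : Even m := by
    by_contra hodd
    have hoddz : ¬ Even ((m : ℤ)) := by simpa [Int.even_coe_nat] using hodd
    have := hχzpow (m : ℤ) f
    rw [if_neg hoddz, zpow_natCast, hcm_f] at this
    cases hb : χ f <;> rw [hb] at this <;> simp at this
  obtain ⟨t, ht⟩ := hmeven
  rw [hCcard, ht]
  exact ⟨t, by ring⟩
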